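/- (List size lemma) Let 𝒞 = {x̄₁,…,x̄_M} ⊆ 𝒳ⁿ be a codebook of constant composition P̂_X with M = e^{nR}, let X be uniform on 𝒞, and let Z ∈ 𝒵ⁿ be such that, conditioned on X = x̄_i and on the event that the joint type of (X,Z) equals a fixed P̂_{XZ}, Z is uniform on the conditional type class 𝒯ₙ(P̂_{Z|X}|x̄_i). Define the list ℒ(z) = 𝒞 ∩ 𝒯ₙ(P̂_{X|Z}|z). Then for any τ ≥ 0, Pr(|ℒ(Z)| ≥ e^{nτ} | joint type = P̂_{XZ}) ≥ 1 − (n+1)^{|𝒳||𝒵|−1}·e^{−n[R − I(P̂_{XZ}) − τ]}. -/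

import Mathlib

open Finset
open scoped Classical
open Nat in
private lemma fac_le_fac_mul_pow (l d : ℕ) : (l + d)! ≤ l ! * (l + d) ^ d := by
  induction d with
  | zero => simp
  | succ d ih =>
    have h1 : (l + (d+1))! = (l + d + 1) * (l + d)! := by
      rw [show l + (d+1) = (l+d) + 1 from rfl, Nat.factorial_succ]
    rw [h1]
    calc (l + d + 1) * (l + d)! ≤ (l + d + 1) * (l ! * (l + d) ^ d) :=
          Nat.mul_le_mul_left _ ih
      _ ≤ (l + d + 1) * (l ! * (l + d + 1) ^ d) := by
          exact Nat.mul_le_mul_left _ (Nat.mul_le_mul_left _ (Nat.pow_le_pow_left (Nat.le_succ _) _))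
      _ = l ! * (l + (d+1)) ^ (d+1) := by ring
open Nat in
private lemma fac_pow_le (k l : ℕ) : k ! * k ^ l ≤ l ! * k ^ k := by
  rcases le_total l k with h | h
  · obtain ⟨d, rfl⟩ := Nat.exists_eq_add_of_le h
    calc (l + d)! * (l + d) ^ l ≤ (l ! * (l + d) ^ d) * (l + d) ^ l :=
          Nat.mul_le_mul_right _ (fac_le_fac_mul_pow l d)
      _ = l ! * (l + d) ^ (l + d) := by rw [mul_assoc, ← pow_add, add_comm d l]
  · obtain ⟨d, rfl⟩ := Nat.exists_eq_add_of_le h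
    calc k ! * k ^ (k + d) = (k ! * k ^ d) * k ^ k := by rw [mul_assoc, ← pow_add, add_comm d k]
      _ ≤ (k ! * (k+1) ^ d) * k ^ k :=
          Nat.mul_le_mul_right _ (Nat.mul_le_mul_left _ (Nat.pow_le_pow_left (Nat.le_succ _) _))
      _ ≤ (k + d)! * k ^ k := Nat.mul_le_mul_right _ Nat.factorial_mul_pow_le_factorial

private def sigmaFinEquiv {Z : Type*} (c : Z → ℕ) (b : Z) :
    {p : Σ b', Fin (c b') // p.1 = b} ≃ Fin (c b) where
  toFun p := ⟨p.1.2.1, by rcases p with ⟨⟨b', x⟩, rfl⟩; exact x.isLt⟩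
  invFun x := ⟨⟨b, x⟩, rfl⟩
  left_inv := by rintro ⟨⟨b', x⟩, rfl⟩; rfl
  right_inv x := rfl

open Nat in
private lemma W_card {S Z : Type*} [Fintype S] [Fintype Z]
    (c : Z → ℕ) (hc : ∑ b, c b = Fintype.card S)
    (W : Finset (S → Z)) (hWdef : ∀ f, f ∈ W ↔ ∀ b, (univ.filter fun i => f i = b).card = c b) :
    W.card * ∏ b, (c b)! = (Fintype.card S)! := by
  classical
  have hcardT : Fintype.card (Σ b, Fin (c b)) = Fintype.card S := by simp [hc]
  have key : ∀ (e : S ≃ Σ b, Fin (c b)) (b : Z),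
      (univ.filter fun i => (e i).1 = b).card = c b := by
    intro e b
    rw [← Fintype.card_subtype]
    have e1 : {i // (e i).1 = b} ≃ {p : Σ b', Fin (c b') // p.1 = b} :=
      e.subtypeEquiv (fun i => Iff.rfl)
    rw [Fintype.card_congr (e1.trans (sigmaFinEquiv c b)), Fintype.card_fin]
  have hmaps : ∀ e : S ≃ Σ b, Fin (c b), e ∈ (univ : Finset (S ≃ Σ b, Fin (c b))) →
      (fun i => (e i).1) ∈ W := by
    intro e _
    exact (hWdef _).mpr (key e)
  have hsum := Finset.card_eq_sum_card_fiberwise hmaps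
  have hfiber : ∀ f ∈ W, (univ.filter fun e : S ≃ Σ b, Fin (c b) =>
      (fun i => (e i).1) = f).card = ∏ b, (c b)! := by
    intro f hf
    have hf' : ∀ b, (univ.filter fun i => f i = b).card = c b := (hWdef f).mp hf
    rw [← Fintype.card_subtype]
    have E : {e : S ≃ Σ b, Fin (c b) // (fun i => (e i).1) = f} ≃
        ∀ b, ({i // f i = b} ≃ Fin (c b)) := by
      refine
      { toFun := fun e b =>
          ((e.1.subtypeEquiv (fun i => by
              rw [show (e.1 i).1 = f i from congrFun e.2 i])).trans (sigmaFinEquiv c b))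
        invFun := fun σ => ⟨(Equiv.sigmaFiberEquiv f).symm.trans (Equiv.sigmaCongrRight σ),
          by funext i; rfl⟩
        left_inv := ?_
        right_inv := ?_ }
      · rintro ⟨e, he⟩
        apply Subtype.ext
        apply Equiv.ext
        intro i
        show (⟨f i, _⟩ : Σ b, Fin (c b)) = e i
        have h1 : (e i).1 = f i := congrFun he i
        refine Sigma.ext h1.symm ?_
        rw [Fin.heq_ext_iff (congrArg c h1.symm)]
        rfl
      · intro σ
        funext b
        apply Equiv.ext
        rintro ⟨i, hi⟩
        subst hi
        rfl
    rw [Fintype.card_congr E, Fintype.card_pi]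
    refine Finset.prod_congr rfl fun b _ => ?_
    have hcb : Fintype.card {i // f i = b} = Fintype.card (Fin (c b)) := by
      rw [Fintype.card_subtype, hf' b, Fintype.card_fin]
    rw [Fintype.card_equiv (Fintype.equivOfCardEq hcb), Fintype.card_subtype, hf' b]
  have hcardE : (univ : Finset (S ≃ Σ b, Fin (c b))).card = (Fintype.card S)! := by
    rw [Finset.card_univ, Fintype.card_equiv (Fintype.equivOfCardEq hcardT.symm)]
  rw [← hcardE, hsum, Finset.sum_congr rfl hfiber, Finset.sum_const, smul_eq_mul]

private lemma card_filter_subtype {α : Type*} [Fintype α] (p q : α → Prop) :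
    (univ.filter fun i : {i // p i} => q i.1).card = (univ.filter fun i => p i ∧ q i).card := by
  classical
  rw [← Fintype.card_subtype, ← Fintype.card_subtype]
  exact Fintype.card_congr (Equiv.subtypeSubtypeEquivSubtypeInter p q)

private lemma V_card {n : ℕ} {X Z : Type*} [Fintype X] [Fintype Z]
    (x : Fin n → X) (l : X × Z → ℕ) :
    (univ.filter fun z : Fin n → Z =>
        ∀ a b, (univ.filter fun i => x i = a ∧ z i = b).card = l (a, b)).card
      = ∏ a, (univ.filter fun g : {i // x i = a} → Z =>
          ∀ b, (univ.filter fun i => g i = b).card = l (a, b)).card := by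
  classical
  rw [← Fintype.card_piFinset]
  refine Finset.card_bij' (fun z _ => fun a i => z i.1)
    (fun g _ => fun i => g (x i) ⟨i, rfl⟩) ?_ ?_ ?_ ?_
  case refine_1 =>
    intro z hz
    simp only [mem_filter, mem_univ, true_and] at hz
    rw [Fintype.mem_piFinset]
    intro a
    simp only [mem_filter, mem_univ, true_and]
    intro b
    rw [card_filter_subtype (fun i => x i = a) (fun i => z i = b)]
    exact hz a b
  case refine_2 =>
    intro g hg
    rw [Fintype.mem_piFinset] at hg
    simp only [mem_filter, mem_univ, true_and]
    intro a b
    have hg' := hg a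
    simp only [mem_filter, mem_univ, true_and] at hg'
    rw [← hg' b,
      ← card_filter_subtype (fun i => x i = a) (fun i => g (x i) ⟨i, rfl⟩ = b)]
    congr 1
    apply Finset.filter_congr
    rintro ⟨i, rfl⟩ _
    exact Iff.rfl
  case refine_3 => intro z hz; rfl
  case refine_4 =>
    intro g hg
    funext a
    funext i
    rcases i with ⟨i, rfl⟩
    rfl
open Nat in
private lemma W_max {S Z : Type*} [Fintype S] [Fintype Z]
    (lc kc : Z → ℕ) (Wl Wk : ℕ)
    (hWl : Wl * ∏ b, (lc b)! = (Fintype.card S)!)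
    (hWk : Wk * ∏ b, (kc b)! = (Fintype.card S)!) :
    Wl * ∏ b, kc b ^ lc b ≤ Wk * ∏ b, kc b ^ kc b := by
  have h1 : (∏ b, (kc b)!) * ∏ b, kc b ^ lc b ≤ (∏ b, (lc b)!) * ∏ b, kc b ^ kc b := by
    rw [← Finset.prod_mul_distrib, ← Finset.prod_mul_distrib]
    exact Finset.prod_le_prod' fun b _ => fac_pow_le (kc b) (lc b)
  have hpos : 0 < (∏ b, (lc b)!) * ∏ b, kc b ^ kc b := by
    apply Nat.mul_pos
    · exact Finset.prod_pos fun b _ => Nat.factorial_pos _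
    · apply Finset.prod_pos
      intro b _
      rcases Nat.eq_zero_or_pos (kc b) with h | h
      · simp [h]
      · exact Nat.pow_pos h
  apply Nat.le_of_mul_le_mul_right _ hpos
  calc Wl * (∏ b, kc b ^ lc b) * ((∏ b, (lc b)!) * ∏ b, kc b ^ kc b)
      = (Wl * ∏ b, (lc b)!) * ((∏ b, kc b ^ lc b) * ∏ b, kc b ^ kc b) := by ring
    _ = (Wk * ∏ b, (kc b)!) * ((∏ b, kc b ^ lc b) * ∏ b, kc b ^ kc b) := by rw [hWl, hWk]
    _ = (Wk * ∏ b, kc b ^ kc b) * ((∏ b, (kc b)!) * ∏ b, kc b ^ lc b) := by ring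
    _ ≤ (Wk * ∏ b, kc b ^ kc b) * ((∏ b, (lc b)!) * ∏ b, kc b ^ kc b) :=
        Nat.mul_le_mul_left _ h1
set_option maxHeartbeats 1600000 in
set_option maxRecDepth 10000 in
/-- list size lemma. `C` is a constant-composition codebook of
block length `n`; for each codeword `x`, `T x` is the conditional type class of
sequences `z` whose joint type with `x` is the fixed joint type `Phat`.
Conditioned on the joint type of `(X,Z)` being `Phat`, `X` is uniform on `C` and
`Z` is uniform on `T X`.  The list is `ℒ(z) = {x' ∈ C : z ∈ T x'}`.  Then for
`τ ≥ 0`, the conditional probability that `|ℒ(Z)| ≥ e^{nτ}` is at least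
`1 − (n+1)^{|𝒳||𝒵|−1}·e^{−n[R − I(Phat) − τ]}`, where `R = (1/n)·log|C|` and
`I(Phat)` is the mutual information of the joint type. -/
theorem list_size_lemma
    {𝒳 𝒵 : Type*} [Fintype 𝒳] [Fintype 𝒵]
    (n : ℕ) (hn : 0 < n)
    (C : Finset (Fin n → 𝒳)) (hCne : C.Nonempty)
    (Phat : 𝒳 × 𝒵 → ℝ)
    (T : (Fin n → 𝒳) → Finset (Fin n → 𝒵))
    (hT : ∀ x z, z ∈ T x ↔ ∀ a b,
      ((univ.filter (fun i => x i = a ∧ z i = b)).card : ℝ) / n = Phat (a, b))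
    (hTne : ∀ x ∈ C, (T x).Nonempty)
    (hcc : ∀ x ∈ C, ∀ x' ∈ C, (T x).card = (T x').card)
    (τ : ℝ) (hτ : 0 ≤ τ)
    (R : ℝ) (hR : R = Real.log C.card / n)
    (I : ℝ) (hI : I = ∑ p : 𝒳 × 𝒵, Phat p *
      Real.log (Phat p / ((∑ b, Phat (p.1, b)) * (∑ a, Phat (a, p.2))))) :
    (1 / (C.card : ℝ)) * ∑ x ∈ C,
        (((T x).filter (fun z =>
            Real.exp (n * τ) ≤ ((C.filter (fun x' => z ∈ T x')).card : ℝ))).card : ℝ)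
          / ((T x).card : ℝ) ≥
      1 - ((n + 1 : ℝ)) ^ (Fintype.card 𝒳 * Fintype.card 𝒵 - 1) *
        Real.exp (-(n * (R - I - τ))) := by
  classical
  obtain ⟨x₀, hx₀⟩ := hCne
  obtain ⟨z₀, hz₀⟩ := hTne x₀ hx₀
  have hn' : (0:ℝ) < n := by exact_mod_cast hn
  have hnne : (n:ℝ) ≠ 0 := ne_of_gt hn'
  set K : ℕ := Fintype.card 𝒳 * Fintype.card 𝒵 - 1 with hK
  set M : ℕ := C.card with hM
  set Pg : (Fin n → 𝒵) → Prop := fun z =>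
    Real.exp (n * τ) ≤ ((C.filter (fun x' => z ∈ T x')).card : ℝ) with hPg
  set k : 𝒳 × 𝒵 → ℕ := fun p => (univ.filter fun i => x₀ i = p.1 ∧ z₀ i = p.2).card with hkdef
  set nA : 𝒳 → ℕ := fun a => (univ.filter fun i => x₀ i = a).card with hnA
  set mB : 𝒵 → ℕ := fun b => ∑ a, k (a, b) with hmB
  have hPhat : ∀ p : 𝒳 × 𝒵, Phat p = (k p : ℝ) / n := fun p => ((hT x₀ z₀).mp hz₀ p.1 p.2).symm
  have hcount : ∀ x z, z ∈ T x → ∀ p : 𝒳 × 𝒵,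
      (univ.filter fun i => x i = p.1 ∧ z i = p.2).card = k p := by
    intro x z hzT p
    have h1 := (hT x z).mp hzT p.1 p.2
    rw [hPhat ⟨p.1, p.2⟩] at h1
    field_simp at h1
    exact_mod_cast h1
  have hfib : ∀ (z : Fin n → 𝒵) (a : 𝒳),
      ∑ b, (univ.filter fun i => x₀ i = a ∧ z i = b).card = nA a := by
    intro z a
    simp only [hnA]
    rw [Finset.card_eq_sum_card_fiberwise (s := univ.filter fun i => x₀ i = a)
      (t := univ) (f := z) (fun i _ => mem_univ _)]
    exact Finset.sum_congr rfl fun b _ => by rw [Finset.filter_filter]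
  have hkA : ∀ a, ∑ b, k (a, b) = nA a := fun a => hfib z₀ a
  have hnAn : ∑ a, nA a = n := by
    have h := Finset.card_eq_sum_card_fiberwise (s := (univ : Finset (Fin n)))
      (t := univ) (f := x₀) (fun i _ => mem_univ _)
    rw [Finset.card_univ, Fintype.card_fin] at h
    simp only [hnA]; exact h.symm
  have hmBn : ∑ b, mB b = n := by
    simp only [hmB]
    rw [Finset.sum_comm]
    calc ∑ a, ∑ b, k (a, b) = ∑ a, nA a := Finset.sum_congr rfl fun a _ => hkA a
      _ = n := hnAn
  have hMpos : 0 < M := Finset.card_pos.mpr ⟨x₀, hx₀⟩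
  have expR : Real.exp (n * R) = (M : ℝ) := by
    rw [hR, hM, mul_div_cancel₀ _ hnne, Real.exp_log (by exact_mod_cast hMpos)]
  set QZ : 𝒵 → ℝ := fun b => (mB b : ℝ) / n with hQZ
  set r : 𝒳 × 𝒵 → ℝ := fun p => (k p : ℝ) / (nA p.1 : ℝ) with hr
  set w : ℝ := ∏ p : 𝒳 × 𝒵, r p ^ k p with hw
  set u : ℝ := ∏ b, QZ b ^ mB b with hu
  set t : ℕ := (T x₀).card with ht
  have htpos : 0 < t := Finset.card_pos.mpr ⟨z₀, hz₀⟩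
  set Sg : Finset (Fin n → 𝒵) := univ.filter (fun z => ∃ x ∈ C, z ∈ T x) with hSg
  have hTc : ∀ x ∈ C, (T x).card = t := fun x hx => by rw [ht]; exact hcc x hx x₀ hx₀
  -- Step B
  have stepB : (1 / (M : ℝ)) * ∑ x ∈ C, (((T x).filter Pg).card : ℝ) / ((T x).card : ℝ)
      = 1 - ((∑ x ∈ C, ((T x).filter (fun z => ¬ Pg z)).card : ℕ) : ℝ) / (M * t) := by
    have hsplit : ∀ x ∈ C, (((T x).filter Pg).card : ℝ)
        = (t : ℝ) - (((T x).filter (fun z => ¬ Pg z)).card : ℝ) := by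
      intro x hx
      have h := Finset.card_filter_add_card_filter_not (s := T x) (p := Pg)
      rw [hTc x hx] at h
      have h' : (((T x).filter Pg).card : ℝ) + (((T x).filter (fun z => ¬ Pg z)).card : ℝ)
          = (t : ℝ) := by exact_mod_cast h
      linarith
    have h1 : ∑ x ∈ C, (((T x).filter Pg).card : ℝ) / ((T x).card : ℝ)
        = ∑ x ∈ C, ((t : ℝ) - (((T x).filter (fun z => ¬ Pg z)).card : ℝ)) / (t : ℝ) := by
      refine Finset.sum_congr rfl fun x hx => ?_
      rw [hsplit x hx, hTc x hx]
    rw [h1, ← Finset.sum_div, Finset.sum_sub_distrib, Finset.sum_const, nsmul_eq_mul, ← hM]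
    have htne : (t:ℝ) ≠ 0 := by exact_mod_cast htpos.ne'
    have hMne : (M:ℝ) ≠ 0 := by exact_mod_cast hMpos.ne'
    push_cast
    field_simp
  -- Step C
  have stepC : ((∑ x ∈ C, ((T x).filter (fun z => ¬ Pg z)).card : ℕ) : ℝ)
      ≤ Real.exp (n * τ) * (Sg.card : ℝ) := by
    have h0 : ∀ x : Fin n → 𝒳, (T x).filter (fun z => ¬ Pg z)
        = univ.filter (fun z => z ∈ T x ∧ ¬ Pg z) := by
      intro x; ext z; simp [Finset.mem_filter]
    have h1 : ∑ x ∈ C, ((T x).filter (fun z => ¬ Pg z)).card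
        = ∑ z : Fin n → 𝒵, (C.filter (fun x => z ∈ T x ∧ ¬ Pg z)).card := by
      simp only [h0, Finset.card_filter]
      rw [Finset.sum_comm]
    rw [h1]
    push_cast
    have h2 : ∀ z : Fin n → 𝒵, ((C.filter (fun x => z ∈ T x ∧ ¬ Pg z)).card : ℝ)
        ≤ Real.exp (n * τ) * (if z ∈ Sg then (1:ℝ) else 0) := by
      intro z
      by_cases hPz : Pg z
      · have he : C.filter (fun x => z ∈ T x ∧ ¬ Pg z) = ∅ := by
          apply Finset.filter_false_of_mem
          intro x hx h
          exact h.2 hPz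
        rw [he]
        simp only [Finset.card_empty, Nat.cast_zero]
        positivity
      · have heq : C.filter (fun x => z ∈ T x ∧ ¬ Pg z) = C.filter (fun x => z ∈ T x) := by
          apply Finset.filter_congr
          intro x hx
          simp [hPz]
        rw [heq]
        rcases Finset.eq_empty_or_nonempty (C.filter (fun x => z ∈ T x)) with he | hne
        · rw [he]
          simp only [Finset.card_empty, Nat.cast_zero]
          positivity
        · have hzS : z ∈ Sg := by
            obtain ⟨x, hx⟩ := hne
            rw [Finset.mem_filter] at hx
            rw [hSg, Finset.mem_filter]
            exact ⟨mem_univ _, x, hx.1, hx.2⟩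
          rw [if_pos hzS, mul_one]
          have hlt : ¬ (Real.exp (n * τ) ≤ ((C.filter (fun x' => z ∈ T x')).card : ℝ)) := hPz
          push_neg at hlt
          exact le_of_lt hlt
    calc ∑ z : Fin n → 𝒵, ((C.filter (fun x => z ∈ T x ∧ ¬ Pg z)).card : ℝ)
        ≤ ∑ z : Fin n → 𝒵, Real.exp (n * τ) * (if z ∈ Sg then (1:ℝ) else 0) :=
          Finset.sum_le_sum fun z _ => h2 z
      _ = Real.exp (n * τ) * (Sg.card : ℝ) := by
          rw [← Finset.mul_sum]
          congr 1
          rw [Finset.sum_ite_mem, Finset.univ_inter, Finset.sum_const, Finset.card_eq_sum_ones Sg]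
          simp
  -- counts of z for z ∈ Sg
  have hzc : ∀ z ∈ Sg, ∀ b, (univ.filter fun i => z i = b).card = mB b := by
    intro z hz b
    rw [hSg, Finset.mem_filter] at hz
    obtain ⟨-, x, hx, hzT⟩ := hz
    rw [Finset.card_eq_sum_card_fiberwise (s := univ.filter fun i => z i = b)
      (t := univ) (f := x) (fun i _ => mem_univ _)]
    simp only [hmB]
    refine Finset.sum_congr rfl fun a _ => ?_
    rw [Finset.filter_filter]
    rw [← hcount x z hzT (a, b)]
    congr 1
    apply Finset.filter_congr
    intro i _
    exact and_comm
  have hQZnn : ∀ b, 0 ≤ QZ b := fun b => by rw [hQZ]; exact div_nonneg (Nat.cast_nonneg _) hn'.le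
  have hQZsum : ∑ b, QZ b = 1 := by
    simp only [hQZ]
    rw [← Finset.sum_div, div_eq_one_iff_eq hnne]
    exact_mod_cast hmBn
  have hptu : ∀ z ∈ Sg, ∏ i, QZ (z i) = u := by
    intro z hz
    have h1 : ∏ i, QZ (z i)
        = ∏ b, ∏ i ∈ univ.filter (fun i => z i = b), QZ (z i) :=
      (Finset.prod_fiberwise_of_maps_to (fun i _ => mem_univ (z i)) _).symm
    rw [h1, hu]
    refine Finset.prod_congr rfl fun b _ => ?_
    rw [← hzc z hz b]
    rw [Finset.prod_congr rfl (fun i hi => by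
      rw [(Finset.mem_filter.mp hi).2] : ∀ i ∈ univ.filter (fun i => z i = b), QZ (z i) = QZ b)]
    rw [Finset.prod_const]
  have htotu : ∑ z : Fin n → 𝒵, ∏ i, QZ (z i) = 1 := by
    have h := Finset.prod_univ_sum (fun _ : Fin n => (univ : Finset 𝒵)) (fun _ b => QZ b)
    rw [Fintype.piFinset_univ] at h
    rw [← h, Finset.prod_congr rfl (fun i _ => hQZsum), Finset.prod_const, one_pow]
  have stepD : (Sg.card : ℝ) * u ≤ 1 := by
    have h2 : ∑ z ∈ Sg, ∏ i, QZ (z i) = (Sg.card : ℝ) * u := by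
      rw [Finset.sum_congr rfl hptu, Finset.sum_const, nsmul_eq_mul]
    rw [← h2, ← htotu]
    apply Finset.sum_le_sum_of_subset_of_nonneg (Finset.subset_univ _)
    intro z _ _
    exact Finset.prod_nonneg fun i _ => hQZnn (z i)
  have expu : Real.exp (n * ∑ b, QZ b * Real.log (QZ b)) = u := by
    rw [Finset.mul_sum, Real.exp_sum, hu]
    refine Finset.prod_congr rfl fun b _ => ?_
    have hmb : (n : ℝ) * QZ b = mB b := by
      rw [hQZ]; field_simp
    rcases Nat.eq_zero_or_pos (mB b) with h0 | hposb
    · have hqz : QZ b = 0 := by rw [hQZ]; simp [h0]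
      rw [hqz, h0]
      simp
    · have hq : 0 < QZ b := by
        rw [hQZ]
        have : (0:ℝ) < (mB b : ℝ) := by exact_mod_cast hposb
        exact div_pos this hn'
      rw [← mul_assoc, hmb, ← Real.exp_log hq, ← Real.exp_nat_mul]
      congr 1
      rw [Real.log_exp]
  have hupos : 0 < u := by rw [← expu]; exact Real.exp_pos _
  have expw : Real.exp (n * ∑ p : 𝒳 × 𝒵, Phat p * Real.log (r p)) = w := by
    rw [Finset.mul_sum, Real.exp_sum, hw]
    refine Finset.prod_congr rfl fun p _ => ?_
    have hmb : (n : ℝ) * Phat p = k p := by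
      rw [hPhat p]; field_simp
    rcases Nat.eq_zero_or_pos (k p) with h0 | hposk
    · have hp0 : Phat p = 0 := by rw [hPhat p, h0]; simp
      rw [hp0, h0]
      simp
    · have hrp : 0 < r p := by
        rw [hr]
        have hle : k p ≤ nA p.1 := by
          rw [← hkA p.1]
          have : k p = k (p.1, p.2) := by rw [Prod.mk.eta]
          rw [this]
          exact Finset.single_le_sum (f := fun b => k (p.1, b)) (fun b _ => Nat.zero_le _)
            (mem_univ p.2)
        have h1 : (0:ℝ) < (k p : ℝ) := by exact_mod_cast hposk
        have h2 : (0:ℝ) < (nA p.1 : ℝ) := by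
          have : 0 < nA p.1 := lt_of_lt_of_le hposk hle
          exact_mod_cast this
        exact div_pos h1 h2
      rw [← mul_assoc, hmb, ← Real.exp_log hrp, ← Real.exp_nat_mul]
      congr 1
      rw [Real.log_exp]
  have hwpos : 0 < w := by rw [← expw]; exact Real.exp_pos _
  -- I = -H(Z) stuff
  have hPXs : ∀ a, ∑ b, Phat (a, b) = (nA a : ℝ) / n := by
    intro a
    rw [Finset.sum_congr rfl (fun b _ => hPhat (a, b)), ← Finset.sum_div]
    congr 1
    exact_mod_cast hkA a
  have hQZs : ∀ b, ∑ a, Phat (a, b) = QZ b := by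
    intro b
    rw [Finset.sum_congr rfl (fun a _ => hPhat (a, b)), ← Finset.sum_div, hQZ]
    congr 1
    simp only [hmB]
    push_cast
    rfl
  have hI' : I = -(∑ b, QZ b * Real.log (QZ b)) + ∑ p : 𝒳 × 𝒵, Phat p * Real.log (r p) := by
    rw [hI]
    have hterm : ∀ p : 𝒳 × 𝒵, Phat p *
        Real.log (Phat p / ((∑ b, Phat (p.1, b)) * (∑ a, Phat (a, p.2))))
        = Phat p * Real.log (r p) - Phat p * Real.log (QZ p.2) := by
      intro p
      rcases Nat.eq_zero_or_pos (k p) with h0 | hposk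
      · have hp0 : Phat p = 0 := by rw [hPhat p, h0]; simp
        rw [hp0]
        ring
      · have hkr : (0:ℝ) < (k p : ℝ) := by exact_mod_cast hposk
        have hPp : 0 < Phat p := by rw [hPhat p]; exact div_pos hkr hn'
        have hle : k p ≤ nA p.1 := by
          rw [← hkA p.1]
          have he : k p = k (p.1, p.2) := by rw [Prod.mk.eta]
          rw [he]
          exact Finset.single_le_sum (f := fun b => k (p.1, b)) (fun b _ => Nat.zero_le _)
            (mem_univ p.2)
        have hnApos : (0:ℝ) < (nA p.1 : ℝ) := by
          have : 0 < nA p.1 := lt_of_lt_of_le hposk hle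
          exact_mod_cast this
        have hlem : k p ≤ mB p.2 := by
          simp only [hmB]
          have he : k p = k (p.1, p.2) := by rw [Prod.mk.eta]
          rw [he]
          exact Finset.single_le_sum (f := fun a => k (a, p.2)) (fun a _ => Nat.zero_le _)
            (mem_univ p.1)
        have hQZpos : 0 < QZ p.2 := by
          rw [hQZ]
          have : (0:ℝ) < (mB p.2 : ℝ) := by
            exact_mod_cast lt_of_lt_of_le hposk hlem
          exact div_pos this hn'
        have hrpos : 0 < r p := by rw [hr]; exact div_pos hkr hnApos
        rw [hPXs p.1, hQZs p.2]
        have hPX : ((nA p.1 : ℝ) / n) ≠ 0 := by exact (div_pos hnApos hn').ne'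
        have hrw : Phat p / ((nA p.1 : ℝ) / n * QZ p.2) = r p / QZ p.2 := by
          rw [hPhat p, hr]
          field_simp
        rw [hrw, Real.log_div (ne_of_gt hrpos) (ne_of_gt hQZpos)]
        ring
    rw [Finset.sum_congr rfl (fun p _ => hterm p), Finset.sum_sub_distrib]
    have hswap : ∑ p : 𝒳 × 𝒵, Phat p * Real.log (QZ p.2)
        = ∑ b, QZ b * Real.log (QZ b) := by
      rw [Fintype.sum_prod_type_right (f := fun p : 𝒳 × 𝒵 => Phat p * Real.log (QZ p.2))]
      refine Finset.sum_congr rfl fun b _ => ?_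
      show (∑ a, Phat (a, b) * Real.log (QZ b)) = QZ b * Real.log (QZ b)
      rw [← Finset.sum_mul, hQZs b]
    rw [hswap]
    ring
  have hTV : T x₀ = univ.filter (fun z : Fin n → 𝒵 =>
      ∀ a b, (univ.filter fun i => x₀ i = a ∧ z i = b).card = k (a, b)) := by
    ext z
    simp only [Finset.mem_filter, mem_univ, true_and]
    rw [hT x₀ z]
    constructor
    · intro h a b
      have h1 := h a b
      rw [hPhat ⟨a, b⟩] at h1
      field_simp at h1
      exact_mod_cast h1
    · intro h a b
      rw [h a b]
      exact (hPhat (a, b)).symm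
  have stepE : 1 ≤ ((n:ℝ) + 1) ^ K * t * w := by
      have hsub : ∀ a, Fintype.card {i // x₀ i = a} = nA a := by
        intro a; rw [Fintype.card_subtype, hnA]
      set Vset : (𝒳 × 𝒵 → ℕ) → Finset (Fin n → 𝒵) := fun l => univ.filter (fun z =>
        ∀ a b, (univ.filter fun i => x₀ i = a ∧ z i = b).card = l (a, b)) with hVset
      set cm : (Fin n → 𝒵) → (𝒳 × 𝒵 → ℕ) := fun z p =>
        (univ.filter fun i => x₀ i = p.1 ∧ z i = p.2).card with hcm
      set L : Finset (𝒳 × 𝒵 → ℕ) := univ.image cm with hL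
      have hrnn : ∀ p, 0 ≤ r p := fun p => by rw [hr]; exact div_nonneg (Nat.cast_nonneg _) (Nat.cast_nonneg _)
      have natmax : ∀ l : 𝒳 × 𝒵 → ℕ, (∀ a, ∑ b, l (a, b) = nA a) →
          (Vset l).card * ∏ p : 𝒳 × 𝒵, k p ^ l p ≤ (Vset k).card * ∏ p : 𝒳 × 𝒵, k p ^ k p := by
        intro l hl
        simp only [hVset]
        rw [V_card x₀ l, V_card x₀ k, Fintype.prod_prod_type, Fintype.prod_prod_type,
          ← Finset.prod_mul_distrib, ← Finset.prod_mul_distrib]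
        apply Finset.prod_le_prod'
        intro a _
        apply W_max (S := {i // x₀ i = a}) (fun b => l (a, b)) (fun b => k (a, b))
        · exact W_card (fun b => l (a, b)) (by rw [hsub a]; exact hl a) _
            (fun f => by simp [Finset.mem_filter])
        · exact W_card (fun b => k (a, b)) (by rw [hsub a]; exact hkA a) _
            (fun f => by simp [Finset.mem_filter])
      have conv : ∀ l : 𝒳 × 𝒵 → ℕ, (∀ a, ∑ b, l (a, b) = nA a) →
          (∏ p : 𝒳 × 𝒵, r p ^ l p) * ∏ a, (nA a : ℝ) ^ (nA a)
            = ∏ p : 𝒳 × 𝒵, (k p : ℝ) ^ l p := by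
        intro l hl
        rw [Fintype.prod_prod_type, Fintype.prod_prod_type, ← Finset.prod_mul_distrib]
        refine Finset.prod_congr rfl fun a _ => ?_
        rcases Nat.eq_zero_or_pos (nA a) with h0 | hpos
        · have hz : ∀ b, l (a, b) = 0 := by
            intro b
            have hs := hl a
            rw [h0] at hs
            exact (Finset.sum_eq_zero_iff.mp hs) b (mem_univ b)
          simp [hz, h0]
        · have hnAne : ((nA a : ℝ)) ≠ 0 := by
            exact_mod_cast Nat.pos_iff_ne_zero.mp hpos
          have hrb : ∀ b, r (a, b) ^ l (a, b)
              = (k (a, b) : ℝ) ^ l (a, b) / (nA a : ℝ) ^ l (a, b) := by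
            intro b; rw [hr, div_pow]
          rw [Finset.prod_congr rfl fun b _ => hrb b, Finset.prod_div_distrib,
            Finset.prod_pow_eq_pow_sum, hl a, div_mul_cancel₀]
          exact pow_ne_zero _ hnAne
      have hDpos : (0:ℝ) < ∏ a, (nA a : ℝ) ^ (nA a) := by
        apply Finset.prod_pos
        intro a _
        rcases Nat.eq_zero_or_pos (nA a) with h0 | hpos
        · rw [h0]; norm_num
        · exact pow_pos (by exact_mod_cast hpos) _
      have realmax : ∀ l : 𝒳 × 𝒵 → ℕ, (∀ a, ∑ b, l (a, b) = nA a) →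
          ((Vset l).card : ℝ) * ∏ p : 𝒳 × 𝒵, r p ^ l p ≤ (t : ℝ) * w := by
        intro l hl
        have htV : (t : ℝ) = ((Vset k).card : ℝ) := by
          rw [ht, hTV]
        rw [htV, hw, ← mul_le_mul_iff_of_pos_right hDpos]
        calc ((Vset l).card : ℝ) * (∏ p : 𝒳 × 𝒵, r p ^ l p) * ∏ a, (nA a : ℝ) ^ (nA a)
            = ((Vset l).card : ℝ) * ∏ p : 𝒳 × 𝒵, (k p : ℝ) ^ l p := by
              rw [mul_assoc, conv l hl]
          _ ≤ ((Vset k).card : ℝ) * ∏ p : 𝒳 × 𝒵, (k p : ℝ) ^ k p := by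
              have hcast := natmax l hl
              have hcast' : (((Vset l).card * ∏ p : 𝒳 × 𝒵, k p ^ l p : ℕ) : ℝ)
                  ≤ (((Vset k).card * ∏ p : 𝒳 × 𝒵, k p ^ k p : ℕ) : ℝ) := by exact_mod_cast hcast
              push_cast at hcast'
              exact hcast'
          _ = ((Vset k).card : ℝ) * (∏ p : 𝒳 × 𝒵, r p ^ k p) * ∏ a, (nA a : ℝ) ^ (nA a) := by
              rw [mul_assoc, conv k hkA]
      have hrow : ∀ i : Fin n, ∑ b, r (x₀ i, b) = 1 := by
        intro i
        have hpos : 0 < nA (x₀ i) := by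
          rw [hnA]
          exact Finset.card_pos.mpr ⟨i, by simp⟩
        simp only [hr]
        rw [← Finset.sum_div,
          div_eq_one_iff_eq (by exact_mod_cast Nat.pos_iff_ne_zero.mp hpos)]
        exact_mod_cast hkA (x₀ i)
      have htot : ∑ z : Fin n → 𝒵, ∏ i, r (x₀ i, z i) = 1 := by
        have h := Finset.prod_univ_sum (fun _ : Fin n => (univ : Finset 𝒵)) (fun i b => r (x₀ i, b))
        rw [Fintype.piFinset_univ] at h
        rw [← h, Finset.prod_congr rfl fun i _ => hrow i, Finset.prod_const, one_pow]
      have hpt : ∀ z : Fin n → 𝒵, ∏ i, r (x₀ i, z i) = ∏ p : 𝒳 × 𝒵, r p ^ cm z p := by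
        intro z
        have h1 : ∏ i, r (x₀ i, z i)
            = ∏ p : 𝒳 × 𝒵, ∏ i ∈ univ.filter (fun i => (x₀ i, z i) = p), r (x₀ i, z i) :=
          (Finset.prod_fiberwise_of_maps_to (fun i _ => mem_univ ((x₀ i, z i))) _).symm
        rw [h1]
        refine Finset.prod_congr rfl fun p _ => ?_
        rw [Finset.prod_congr rfl (fun i hi => by
          rw [(Finset.mem_filter.mp hi).2] : ∀ i ∈ univ.filter (fun i => (x₀ i, z i) = p),
            r (x₀ i, z i) = r p)]
        rw [Finset.prod_const]
        congr 1
        simp only [hcm]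
        congr 1
        apply Finset.filter_congr
        intro i _
        exact Prod.ext_iff
      have hgroup : ∑ z : Fin n → 𝒵, ∏ i, r (x₀ i, z i)
          = ∑ l ∈ L, ((Vset l).card : ℝ) * ∏ p : 𝒳 × 𝒵, r p ^ l p := by
        rw [← Finset.sum_fiberwise_of_maps_to (g := cm) (t := L)
          (fun z _ => Finset.mem_image_of_mem cm (mem_univ z)) (fun z => ∏ i, r (x₀ i, z i))]
        refine Finset.sum_congr rfl fun l hl => ?_
        have hfil : univ.filter (fun z => cm z = l) = Vset l := by
          simp only [hVset, hcm]
          apply Finset.filter_congr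
          intro z _
          rw [funext_iff]
          constructor
          · intro h a b; exact h (a, b)
          · intro h p; exact h p.1 p.2
        calc ∑ z ∈ univ.filter (fun z => cm z = l), ∏ i, r (x₀ i, z i)
            = ∑ z ∈ univ.filter (fun z => cm z = l), ∏ p : 𝒳 × 𝒵, r p ^ l p := by
              refine Finset.sum_congr rfl fun z hz => ?_
              rw [hpt z, (Finset.mem_filter.mp hz).2]
          _ = ((univ.filter (fun z => cm z = l)).card : ℝ) * ∏ p : 𝒳 × 𝒵, r p ^ l p := by
              rw [Finset.sum_const, nsmul_eq_mul]
          _ = ((Vset l).card : ℝ) * ∏ p : 𝒳 × 𝒵, r p ^ l p := by rw [hfil]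
      -- card of L
      have hXpos : 0 < Fintype.card 𝒳 := Fintype.card_pos_iff.mpr ⟨x₀ ⟨0, hn⟩⟩
      have hZpos : 0 < Fintype.card 𝒵 := Fintype.card_pos_iff.mpr ⟨z₀ ⟨0, hn⟩⟩
      set b₀ : 𝒵 := z₀ ⟨0, hn⟩ with hb₀
      have hLcard : L.card ≤ (n + 1) ^ (Fintype.card 𝒳 * (Fintype.card 𝒵 - 1)) := by
        have hbound : ∀ l ∈ L, ∀ p : 𝒳 × 𝒵, l p ≤ n := by
          intro l hl p
          obtain ⟨z, _, rfl⟩ := Finset.mem_image.mp hl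
          simp only [hcm]
          calc (univ.filter fun i => x₀ i = p.1 ∧ z i = p.2).card ≤ (univ : Finset (Fin n)).card :=
                Finset.card_filter_le _ _
            _ = n := by rw [Finset.card_univ, Fintype.card_fin]
        have hsums : ∀ l ∈ L, ∀ a, ∑ b, l (a, b) = nA a := by
          intro l hl a
          obtain ⟨z, _, rfl⟩ := Finset.mem_image.mp hl
          exact hfib z a
        have hinj := Finset.card_le_card_of_injOn
          (f := fun (l : 𝒳 × 𝒵 → ℕ) (q : 𝒳 × {b : 𝒵 // b ≠ b₀}) =>
            (⟨min (l (q.1, q.2.1)) n, Nat.lt_succ_of_le (Nat.min_le_right _ _)⟩ : Fin (n+1)))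
          (s := L) (t := univ) (fun l _ => mem_univ _) ?_
        · calc L.card ≤ (univ : Finset (𝒳 × {b : 𝒵 // b ≠ b₀} → Fin (n+1))).card := hinj
            _ = (n + 1) ^ (Fintype.card 𝒳 * (Fintype.card 𝒵 - 1)) := by
              rw [Finset.card_univ, Fintype.card_fun, Fintype.card_fin, Fintype.card_prod]
              congr 2
              rw [Fintype.card_subtype_compl, Fintype.card_subtype_eq]
        · intro l₁ h₁ l₂ h₂ heq
          rw [Finset.mem_coe] at h₁ h₂
          funext p
          obtain ⟨a, b⟩ := p
          by_cases hbb : b = b₀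
          · subst hbb
            have hsum1 := hsums l₁ h₁ a
            have hsum2 := hsums l₂ h₂ a
            rw [← Finset.add_sum_erase univ _ (mem_univ b₀)] at hsum1 hsum2
            have herase : ∑ b' ∈ univ.erase b₀, l₁ (a, b') = ∑ b' ∈ univ.erase b₀, l₂ (a, b') := by
              refine Finset.sum_congr rfl fun b' hb' => ?_
              have hne := (Finset.mem_erase.mp hb').1
              have := congrFun heq (a, ⟨b', hne⟩)
              have hv := congrArg Fin.val this
              simp only at hv
              rw [min_eq_left (hbound l₁ h₁ (a, b')), min_eq_left (hbound l₂ h₂ (a, b'))] at hv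
              exact hv
            omega
          · have := congrFun heq (a, ⟨b, hbb⟩)
            have hv := congrArg Fin.val this
            simp only at hv
            rw [min_eq_left (hbound l₁ h₁ (a, b)), min_eq_left (hbound l₂ h₂ (a, b))] at hv
            exact hv
      have hexp : (n + 1) ^ (Fintype.card 𝒳 * (Fintype.card 𝒵 - 1)) ≤ (n + 1) ^ K := by
        apply Nat.pow_le_pow_right (Nat.succ_le_succ (Nat.zero_le n))
        rw [hK]
        obtain ⟨m, hm⟩ := Nat.exists_eq_add_of_le hZpos
        rw [hm]
        have h1 : Fintype.card 𝒳 * (1 + m - 1) = Fintype.card 𝒳 * m := by norm_num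
        rw [h1, Nat.mul_add, Nat.mul_one]
        omega
      have htwnn : (0:ℝ) ≤ (t : ℝ) * w := by
        apply mul_nonneg (Nat.cast_nonneg t)
        rw [hw]
        exact Finset.prod_nonneg fun p _ => pow_nonneg (hrnn p) _
      calc (1:ℝ) = ∑ z : Fin n → 𝒵, ∏ i, r (x₀ i, z i) := htot.symm
        _ = ∑ l ∈ L, ((Vset l).card : ℝ) * ∏ p : 𝒳 × 𝒵, r p ^ l p := hgroup
        _ ≤ ∑ l ∈ L, (t : ℝ) * w := Finset.sum_le_sum fun l hl => realmax l (fun a => by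
            obtain ⟨z, _, rfl⟩ := Finset.mem_image.mp hl
            exact hfib z a)
        _ = (L.card : ℝ) * ((t : ℝ) * w) := by rw [Finset.sum_const, nsmul_eq_mul]
        _ ≤ ((n:ℝ) + 1) ^ K * ((t : ℝ) * w) := by
            apply mul_le_mul_of_nonneg_right _ htwnn
            have : (L.card : ℝ) ≤ (((n + 1) ^ K : ℕ) : ℝ) := by
              exact_mod_cast le_trans hLcard hexp
            push_cast at this
            exact this
        _ = ((n:ℝ) + 1) ^ K * t * w := by ring
  have hA : Real.exp ((n:ℝ) * I) = u⁻¹ * w := by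
    have h : (n:ℝ) * I = -((n:ℝ) * ∑ b, QZ b * Real.log (QZ b))
        + (n:ℝ) * ∑ p : 𝒳 × 𝒵, Phat p * Real.log (r p) := by
      rw [hI']; ring
    rw [h, Real.exp_add, Real.exp_neg, expu, expw]
  have hRexp : Real.exp (-((n:ℝ) * (R - I - τ)))
      = ((M:ℝ))⁻¹ * (u⁻¹ * w) * Real.exp ((n:ℝ) * τ) := by
    have h : -((n:ℝ)*(R - I - τ)) = -((n:ℝ)*R) + ((n:ℝ)*I + (n:ℝ)*τ) := by ring
    rw [h, Real.exp_add, Real.exp_add, Real.exp_neg, expR, hA]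
    ring
  have hM' : (0:ℝ) < (M:ℝ) := by exact_mod_cast hMpos
  have ht' : (0:ℝ) < (t:ℝ) := by exact_mod_cast htpos
  set B : ℕ := ∑ x ∈ C, ((T x).filter (fun z => ¬ Pg z)).card with hB
  have hΔ : (B:ℝ)/((M:ℝ)*(t:ℝ)) ≤ ((n:ℝ)+1)^K * Real.exp (-((n:ℝ) * (R - I - τ))) := by
    have hS : (Sg.card : ℝ) ≤ 1/u := (le_div_iff₀ hupos).mpr stepD
    have htb : 1/(t:ℝ) ≤ ((n:ℝ)+1)^K * w := by
      rw [div_le_iff₀ ht']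
      calc (1:ℝ) ≤ ((n:ℝ)+1)^K * t * w := stepE
        _ = ((n:ℝ)+1)^K * w * t := by ring
    have hE : (0:ℝ) ≤ Real.exp ((n:ℝ)*τ) := le_of_lt (Real.exp_pos _)
    calc (B:ℝ)/((M:ℝ)*(t:ℝ)) = (B:ℝ) * (1/(t:ℝ)) * (1/(M:ℝ)) := by
          rw [div_eq_mul_inv, mul_inv]
          ring
      _ ≤ (Real.exp ((n:ℝ)*τ) * (Sg.card:ℝ)) * (1/(t:ℝ)) * (1/(M:ℝ)) := by
          apply mul_le_mul_of_nonneg_right _ (by exact one_div_nonneg.mpr hM'.le)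
          apply mul_le_mul_of_nonneg_right stepC (by exact one_div_nonneg.mpr ht'.le)
      _ ≤ (Real.exp ((n:ℝ)*τ) * (1/u)) * (((n:ℝ)+1)^K * w) * (1/(M:ℝ)) := by
          apply mul_le_mul_of_nonneg_right _ (by exact one_div_nonneg.mpr hM'.le)
          apply mul_le_mul
          · exact mul_le_mul_of_nonneg_left hS hE
          · exact htb
          · exact one_div_nonneg.mpr ht'.le
          · exact mul_nonneg hE (one_div_nonneg.mpr hupos.le)
      _ = ((n:ℝ)+1)^K * Real.exp (-((n:ℝ) * (R - I - τ))) := by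
          rw [hRexp]
          field_simp
  rw [ge_iff_le, stepB]
  linarith [hΔ]
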